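/- For every x > 0, one has x^{−2}·(1 − x/(eˣ − 1)) = ∫₀^∞ e^{−ux}·(u − ⌊u⌋) du, where ⌊u⌋ denotes the integer part of u. In particular the function x ↦ x^{−2}(1 − x/(eˣ−1)) is completely monotone on (0,∞). -/

import Mathlib

open MeasureTheory Set Filter Real Topology

lemma frac_nonneg' (u : ℝ) : 0 ≤ u - ⌊u⌋ := sub_nonneg.2 (Int.floor_le u)

lemma frac_le_one' (u : ℝ) : u - ⌊u⌋ ≤ 1 := by
  have := Int.lt_floor_add_one u; linarith

lemma meas_frac : Measurable fun u : ℝ => u - (⌊u⌋ : ℝ) := measurable_fract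

lemma integrable_pow_exp (n : ℕ) {x : ℝ} (hx : 0 < x) :
    IntegrableOn (fun u : ℝ => u ^ n * Real.exp (-u * x)) (Ioi 0) := by
  apply integrable_of_isBigO_exp_neg (half_pos hx)
    (Continuous.continuousOn (by fun_prop))
  have h1 : Tendsto (fun u : ℝ => ((x/2)*u)^n * Real.exp (-((x/2)*u))) atTop (𝓝 0) :=
    (tendsto_pow_mul_exp_neg_atTop_nhds_zero n).comp
      (tendsto_id.const_mul_atTop (half_pos hx))
  have h2 : Tendsto (fun u : ℝ => u^n * Real.exp (-(x/2)*u)) atTop (𝓝 0) := by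
    have h3 := h1.const_mul ((2/x)^n)
    rw [mul_zero] at h3
    refine Tendsto.congr (fun u => ?_) h3
    rw [← mul_assoc, ← mul_pow]
    have : (2/x) * ((x/2)*u) = u := by field_simp
    rw [this]
    ring_nf
  apply Asymptotics.IsLittleO.isBigO
  rw [Asymptotics.isLittleO_iff_tendsto (fun u h => absurd h (Real.exp_ne_zero _))]
  refine Tendsto.congr (fun u => ?_) h2
  rw [mul_div_assoc, ← Real.exp_sub]
  ring_nf

lemma integrable_main (n : ℕ) {x : ℝ} (hx : 0 < x) :
    IntegrableOn (fun u : ℝ => u ^ n * Real.exp (-u * x) * (u - ⌊u⌋)) (Ioi 0) := by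
  refine (integrable_pow_exp n hx).mono' ?_ ?_
  · exact (((measurable_id.pow_const n).mul
      ((measurable_id.neg.mul_const x).exp)).mul meas_frac).aestronglyMeasurable
  · filter_upwards [ae_restrict_mem measurableSet_Ioi] with u hu
    have hu0 : (0:ℝ) ≤ u := le_of_lt hu
    have hf0 := frac_nonneg' u
    rw [Real.norm_eq_abs, abs_of_nonneg (by positivity)]
    calc u ^ n * Real.exp (-u * x) * (u - ⌊u⌋) ≤ u ^ n * Real.exp (-u * x) * 1 := by
          have : (0:ℝ) ≤ u ^ n * Real.exp (-u * x) := by positivity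
          exact mul_le_mul_of_nonneg_left (frac_le_one' u) this
      _ = u ^ n * Real.exp (-u * x) := mul_one _

lemma hasDerivAt_anti {x : ℝ} (hx : x ≠ 0) (c u : ℝ) :
    HasDerivAt (fun u : ℝ => -(Real.exp (-u*x) * ((u - c)/x + 1/x^2)))
      (Real.exp (-u*x) * (u - c)) u := by
  have h1 : HasDerivAt (fun u : ℝ => -u*x) (-x) u := by
    simpa using ((hasDerivAt_id u).neg.mul_const x)
  have h2 := h1.exp
  have h3 : HasDerivAt (fun u : ℝ => (u - c)/x + 1/x^2) (1/x) u := by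
    exact (((hasDerivAt_id u).sub_const c).div_const x).add_const (1/x^2)
  have h4 : HasDerivAt (fun u : ℝ => -(Real.exp (-u*x) * ((u - c)/x + 1/x^2))) _ u := (h2.mul h3).neg
  convert h4 using 1
  field_simp
  ring

lemma piece (n : ℕ) {x : ℝ} (hx : 0 < x) :
    ∫ u in Ioc (n:ℝ) (n+1), Real.exp (-u*x) * (u - ⌊u⌋) =
      Real.exp (-(n:ℝ)*x) * (1/x^2 - Real.exp (-x) * (1/x + 1/x^2)) := by
  rw [integral_Ioc_eq_integral_Ioo,
    setIntegral_congr_fun (g := fun u => Real.exp (-u*x) * (u - (n:ℝ))) measurableSet_Ioo ?_]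
  · rw [← integral_Ioc_eq_integral_Ioo,
      ← intervalIntegral.integral_of_le (by linarith : (n:ℝ) ≤ n+1)]
    rw [intervalIntegral.integral_eq_sub_of_hasDerivAt
      (fun u _ => hasDerivAt_anti hx.ne' n u) (Continuous.intervalIntegrable (by fun_prop) _ _)]
    have he : Real.exp (-((n:ℝ)+1)*x) = Real.exp (-(n:ℝ)*x) * Real.exp (-x) := by
      rw [← Real.exp_add]; ring_nf
    rw [he]
    ring_nf
  · intro u hu
    obtain ⟨h1, h2⟩ := hu
    have : ⌊u⌋ = (n : ℤ) := by
      rw [Int.floor_eq_iff]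
      constructor
      · exact_mod_cast h1.le
      · push_cast; linarith
    simp only [this]
    push_cast
    ring_nf

lemma iUnion_Ioc_eq : (⋃ n : ℕ, Ioc (n:ℝ) (n+1)) = Ioi 0 := by
  ext u
  simp only [mem_iUnion, mem_Ioc, mem_Ioi]
  constructor
  · rintro ⟨n, h1, h2⟩
    have : (0:ℝ) ≤ n := Nat.cast_nonneg n
    linarith
  · intro hu
    have hc : 1 ≤ ⌈u⌉ := Int.ceil_pos.2 hu
    refine ⟨(⌈u⌉ - 1).toNat, ?_, ?_⟩
    · have hz : (((⌈u⌉ - 1).toNat : ℤ) : ℝ) = (⌈u⌉ : ℝ) - 1 := by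
        rw [Int.toNat_of_nonneg (by omega)]; push_cast; ring
      have := Int.ceil_lt_add_one u
      push_cast at hz ⊢
      rw [hz]
      push_cast at this
      linarith
    · have hz : (((⌈u⌉ - 1).toNat : ℤ) : ℝ) = (⌈u⌉ : ℝ) - 1 := by
        rw [Int.toNat_of_nonneg (by omega)]; push_cast; ring
      have := Int.le_ceil u
      push_cast at hz ⊢
      rw [hz]
      linarith

lemma pairwise_disjoint_Ioc' : Pairwise (Function.onFun Disjoint fun n : ℕ => Ioc (n:ℝ) (n+1)) := by
  intro m n hmn
  simp only [Function.onFun, Set.disjoint_left]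
  intro u h1 h2
  obtain ⟨h1a, h1b⟩ := h1
  obtain ⟨h2a, h2b⟩ := h2
  have : m + 1 ≤ n ∨ n + 1 ≤ m := by omega
  rcases this with h | h
  · have : (m:ℝ) + 1 ≤ n := by exact_mod_cast h
    linarith
  · have : (n:ℝ) + 1 ≤ m := by exact_mod_cast h
    linarith

lemma integral_value {x : ℝ} (hx : 0 < x) :
    ∫ u in Ioi (0:ℝ), Real.exp (-u*x) * (u - ⌊u⌋)
      = (1/x^2 - Real.exp (-x) * (1/x + 1/x^2)) * (1 - Real.exp (-x))⁻¹ := by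
  have hint : IntegrableOn (fun u : ℝ => Real.exp (-u*x) * (u - ⌊u⌋)) (Ioi 0) := by
    simpa using integrable_main 0 hx
  rw [← iUnion_Ioc_eq] at hint ⊢
  rw [integral_iUnion (fun n => measurableSet_Ioc) pairwise_disjoint_Ioc' hint]
  have hp : ∀ n : ℕ, ∫ u in Ioc (n:ℝ) (n+1), Real.exp (-u*x) * (u - ⌊u⌋)
      = Real.exp (-x) ^ n * (1/x^2 - Real.exp (-x) * (1/x + 1/x^2)) := by
    intro n
    rw [piece n hx, ← Real.exp_nat_mul]
    ring_nf
  simp_rw [hp]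
  rw [tsum_mul_right, tsum_geometric_of_lt_one (Real.exp_nonneg _)
    (Real.exp_lt_one_iff.2 (by linarith))]
  ring

lemma part1 {x : ℝ} (hx : 0 < x) :
    (1 - x / (Real.exp x - 1)) / x ^ 2 = ∫ u in Ioi (0:ℝ), Real.exp (-u*x) * (u - ⌊u⌋) := by
  rw [integral_value hx]
  have hx0 : x ≠ 0 := hx.ne'
  have hE : Real.exp x ≠ 0 := Real.exp_ne_zero x
  have h1 : Real.exp x - 1 ≠ 0 := by
    have : 1 < Real.exp x := Real.one_lt_exp_iff.2 hx
    linarith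
  have h2 : 1 - Real.exp (-x) ≠ 0 := by
    have : Real.exp (-x) < 1 := Real.exp_lt_one_iff.2 (by linarith)
    linarith
  rw [Real.exp_neg] at *
  field_simp
  ring

noncomputable def gLap (n : ℕ) (x : ℝ) : ℝ :=
  ∫ u in Ioi (0:ℝ), u ^ n * Real.exp (-u * x) * (u - ⌊u⌋)

lemma gLap_nonneg (n : ℕ) (x : ℝ) : 0 ≤ gLap n x := by
  apply setIntegral_nonneg measurableSet_Ioi
  intro u hu
  have := frac_nonneg' u
  have hu0 : (0:ℝ) ≤ u := le_of_lt hu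
  positivity

lemma gLap_hasDeriv (n : ℕ) {x : ℝ} (hx : 0 < x) :
    HasDerivAt (gLap n) (-(gLap (n+1) x)) x := by
  have main := hasDerivAt_integral_of_dominated_loc_of_deriv_le
    (μ := volume.restrict (Ioi (0:ℝ)))
    (F := fun (y : ℝ) (u : ℝ) => u ^ n * Real.exp (-u * y) * (u - ⌊u⌋))
    (F' := fun (y : ℝ) (u : ℝ) => -(u ^ (n+1) * Real.exp (-u * y) * (u - ⌊u⌋)))
    (x₀ := x) (s := Metric.ball x (x/2))
    (bound := fun u => u ^ (n+1) * Real.exp (-u * (x/2)))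
    (Metric.ball_mem_nhds x (half_pos hx))
    (Filter.Eventually.of_forall fun y =>
      ((((measurable_id.pow_const n).mul
        ((measurable_id.neg.mul_const y).exp)).mul meas_frac).aestronglyMeasurable))
    (integrable_main n hx)
    ((((measurable_id.pow_const (n+1)).mul
        ((measurable_id.neg.mul_const x).exp)).mul meas_frac).neg.aestronglyMeasurable)
    ?_ (integrable_pow_exp (n+1) (half_pos hx)) ?_
  · have h2 := main.2
    have : (∫ u in Ioi (0:ℝ), -(u ^ (n+1) * Real.exp (-u * x) * (u - ⌊u⌋)))
        = -(gLap (n+1) x) := by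
      rw [integral_neg]; rfl
    rw [this] at h2
    exact h2
  · -- bound
    filter_upwards [ae_restrict_mem measurableSet_Ioi] with u hu y hy
    have hu0 : (0:ℝ) ≤ u := le_of_lt hu
    rw [Metric.mem_ball, Real.dist_eq, abs_lt] at hy
    have hyx : x/2 ≤ y := by linarith [hy.1]
    have hf0 := frac_nonneg' u
    have hf1 := frac_le_one' u
    rw [norm_neg, Real.norm_eq_abs, abs_of_nonneg (by positivity)]
    calc u ^ (n+1) * Real.exp (-u * y) * (u - ⌊u⌋)
        ≤ u ^ (n+1) * Real.exp (-u * (x/2)) * 1 := by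
          apply mul_le_mul
          · apply mul_le_mul_of_nonneg_left _ (by positivity)
            apply Real.exp_le_exp.2
            nlinarith
          · exact hf1
          · exact hf0
          · positivity
      _ = u ^ (n+1) * Real.exp (-u * (x/2)) := mul_one _
  · -- differentiability
    filter_upwards with u y _
    have h1 : HasDerivAt (fun y : ℝ => -u * y) (-u) y := by
      simpa using (hasDerivAt_id y).const_mul (-u)
    have h3 : HasDerivAt (fun y : ℝ => u ^ n * Real.exp (-u * y) * (u - ⌊u⌋)) _ y :=
      (h1.exp.const_mul (u ^ n)).mul_const (u - (⌊u⌋:ℝ))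
    refine HasDerivAt.congr_deriv h3 ?_
    rw [pow_succ]
    ring

lemma gLap_iter (n m : ℕ) {x : ℝ} (hx : 0 < x) :
    iteratedDeriv n (gLap m) x = (-1:ℝ) ^ n * gLap (m + n) x := by
  induction n generalizing m x with
  | zero => simp
  | succ k ih =>
    rw [iteratedDeriv_succ']
    have hev : deriv (gLap m) =ᶠ[𝓝 x] fun y => -(gLap (m+1) y) := by
      filter_upwards [isOpen_Ioi.mem_nhds hx] with y hy
      exact (gLap_hasDeriv m hy).deriv
    rw [Filter.EventuallyEq.iteratedDeriv_eq k hev, iteratedDeriv_fun_neg, ih (m+1) hx]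
    rw [show m + (k + 1) = m + 1 + k from by omega]
    ring

/-- For every `x > 0`, `x⁻²(1 − x/(eˣ−1)) = ∫₀^∞ e^{−ux}(u − ⌊u⌋) du`;
in particular `x ↦ x⁻²(1 − x/(eˣ−1))` is completely monotone on `(0,∞)`. -/
theorem frac_part_laplace_CM :
    (∀ x : ℝ, 0 < x →
      (1 - x / (Real.exp x - 1)) / x ^ 2 =
        ∫ u in Set.Ioi (0 : ℝ), Real.exp (-u * x) * (u - ⌊u⌋)) ∧
    (∀ (n : ℕ) (x : ℝ), 0 < x →
      0 ≤ (-1) ^ n *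
        iteratedDeriv n (fun y : ℝ => (1 - y / (Real.exp y - 1)) / y ^ 2) x) := by
  constructor
  · exact fun x hx => part1 hx
  · intro n x hx
    have hfg : (fun y : ℝ => (1 - y / (Real.exp y - 1)) / y ^ 2) =ᶠ[𝓝 x] gLap 0 := by
      filter_upwards [isOpen_Ioi.mem_nhds hx] with y hy
      rw [part1 hy]
      simp [gLap]
    rw [Filter.EventuallyEq.iteratedDeriv_eq n hfg, gLap_iter n 0 hx, ← mul_assoc, ← mul_pow]
    simp only [neg_mul_neg, one_mul, one_pow, zero_add]
    exact gLap_nonneg n x
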